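/- Let X be a metric space, E, F ⊆ X, and γ : C → E ∪ F a continuous map from a nonempty closed set C ⊆ ℝ whose image meets both E and F. Then gap(γ) ≥ d(E, F). -/

import Mathlib

open Set
open scoped ENNReal

lemma stmt14_aux {X : Type*} [MetricSpace X] (E' F' : Set X) (C : Set ℝ) (hC : IsClosed C)
    (γ : ℝ → X) (hγ : ContinuousOn γ C) (hE' : IsClosed E') (hF' : IsClosed F')
    (hdisj : ∀ x, x ∈ E' → x ∈ F' → False)
    (hmap : Set.MapsTo γ C (E' ∪ F'))
    {s t : ℝ} (hs : s ∈ C) (ht : t ∈ C) (hst : s < t)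
    (hγs : γ s ∈ E') (hγt : γ t ∈ F') :
    ∃ u v, u ∈ C ∧ v ∈ C ∧ u < v ∧ Set.Ioo u v ∩ C = ∅ ∧ γ u ∈ E' ∧ γ v ∈ F' := by
  set A := (C ∩ Icc s t) ∩ γ ⁻¹' E' with hA
  have hAclosed : IsClosed A :=
    (hγ.mono inter_subset_left).preimage_isClosed_of_isClosed (hC.inter isClosed_Icc) hE'
  have hAne : A.Nonempty := ⟨s, ⟨hs, le_refl s, hst.le⟩, hγs⟩
  have hAbdd : BddAbove A := ⟨t, fun x hx => hx.1.2.2⟩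
  set u := sSup A with hu
  have huA : u ∈ A := hAclosed.csSup_mem hAne hAbdd
  have huC : u ∈ C := huA.1.1
  have hus : s ≤ u := huA.1.2.1
  have hut : u ≤ t := huA.1.2.2
  have hγu : γ u ∈ E' := huA.2
  have hult : u < t := lt_of_le_of_ne hut (fun h => hdisj (γ u) hγu (by rw [h]; exact hγt))
  set B := (C ∩ Icc u t) ∩ γ ⁻¹' F' with hB
  have hBclosed : IsClosed B :=
    (hγ.mono inter_subset_left).preimage_isClosed_of_isClosed (hC.inter isClosed_Icc) hF'
  have hBne : B.Nonempty := ⟨t, ⟨ht, hult.le, le_refl t⟩, hγt⟩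
  have hBbdd : BddBelow B := ⟨u, fun x hx => hx.1.2.1⟩
  set v := sInf B with hv
  have hvB : v ∈ B := hBclosed.csInf_mem hBne hBbdd
  have huv : u < v :=
    lt_of_le_of_ne hvB.1.2.1 (fun h => hdisj (γ v) (by rw [← h]; exact hγu) hvB.2)
  refine ⟨u, v, huC, hvB.1.1, huv, ?_, hγu, hvB.2⟩
  ext w
  simp only [mem_inter_iff, mem_Ioo, mem_empty_iff_false, iff_false, not_and]
  rintro ⟨hw1, hw2⟩ hwC
  rcases hmap hwC with hwE | hwF
  · have hwA : w ∈ A := ⟨⟨hwC, hus.trans hw1.le, hw2.le.trans hvB.1.2.2⟩, hwE⟩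
    exact absurd (le_csSup hAbdd hwA) (not_le.mpr hw1)
  · have hwB : w ∈ B := ⟨⟨hwC, hw1.le, hw2.le.trans hvB.1.2.2⟩, hwF⟩
    exact absurd (csInf_le hBbdd hwB) (not_le.mpr hw2)

/-- Let `γ : C → E ∪ F` be continuous on a nonempty closed set `C ⊆ ℝ`,
with image meeting both `E` and `F`. Then `gap(γ) ≥ d(E, F)`, where `gap(γ)` is the sum of
`d(γ a, γ b)` over the complementary gaps `(a, b)` of `C` (pairs `a < b` in `C` with
`(a, b) ∩ C = ∅`). -/
theorem stmt14 {X : Type*} [MetricSpace X] (E F : Set X) (C : Set ℝ)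
    (hC : IsClosed C) (hCne : C.Nonempty) (γ : ℝ → X)
    (hγ : ContinuousOn γ C) (hmap : Set.MapsTo γ C (E ∪ F))
    (hE : ∃ t ∈ C, γ t ∈ E) (hF : ∃ t ∈ C, γ t ∈ F) :
    (⨅ x ∈ E, ⨅ y ∈ F, edist x y) ≤
      ∑' q : {q : ℝ × ℝ // q.1 ∈ C ∧ q.2 ∈ C ∧ q.1 < q.2 ∧ Set.Ioo q.1 q.2 ∩ C = ∅},
        edist (γ (q : ℝ × ℝ).1) (γ (q : ℝ × ℝ).2) := by
  classical
  obtain ⟨s, hsC, hsE⟩ := hE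
  obtain ⟨t, htC, htF⟩ := hF
  have key : ∀ p q : X, p ∈ closure E → q ∈ closure F →
      (⨅ x ∈ E, ⨅ y ∈ F, edist x y) ≤ edist p q := by
    intro p q hp hq
    have hpE : EMetric.infEdist p E = 0 := EMetric.mem_closure_iff_infEdist_zero.mp hp
    have hqF : EMetric.infEdist q F = 0 := EMetric.mem_closure_iff_infEdist_zero.mp hq
    have h1 : (⨅ x ∈ E, ⨅ y ∈ F, edist x y) ≤ ⨅ x ∈ E, (edist x p + edist p q) := by
      refine iInf₂_mono fun x hx => ?_
      calc (⨅ y ∈ F, edist x y) = EMetric.infEdist x F := rfl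
        _ ≤ EMetric.infEdist q F + edist x q := EMetric.infEdist_le_infEdist_add_edist
        _ = edist x q := by rw [hqF, zero_add]
        _ ≤ edist x p + edist p q := edist_triangle _ _ _
    refine h1.trans (le_of_eq ?_)
    calc (⨅ x ∈ E, (edist x p + edist p q))
        = (⨅ x ∈ E, edist x p) + edist p q := by simp_rw [← ENNReal.iInf_add]
      _ = EMetric.infEdist p E + edist p q := by
          simp_rw [edist_comm _ p]; rfl
      _ = edist p q := by rw [hpE, zero_add]
  by_cases hzero : (⨅ x ∈ E, ⨅ y ∈ F, edist x y) = 0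
  · rw [hzero]; exact zero_le
  have hdisj : ∀ x, x ∈ closure E → x ∈ closure F → False := fun x h1 h2 =>
    hzero (le_antisymm (by simpa using key x x h1 h2) zero_le)
  have hmap' : Set.MapsTo γ C (closure E ∪ closure F) :=
    hmap.mono_right (union_subset_union subset_closure subset_closure)
  rcases lt_trichotomy s t with h | h | h
  · obtain ⟨u, v, huC, hvC, huv, hgap, hγu, hγv⟩ :=
      stmt14_aux (closure E) (closure F) C hC γ hγ isClosed_closure isClosed_closure hdisj
        hmap' hsC htC h (subset_closure hsE) (subset_closure htF)
    refine le_trans (key _ _ hγu hγv) (ENNReal.le_tsum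
      (⟨(u, v), huC, hvC, huv, hgap⟩ :
        {q : ℝ × ℝ // q.1 ∈ C ∧ q.2 ∈ C ∧ q.1 < q.2 ∧ Set.Ioo q.1 q.2 ∩ C = ∅}))
  · subst h
    exact (hdisj (γ s) (subset_closure hsE) (subset_closure htF)).elim
  · obtain ⟨u, v, huC, hvC, huv, hgap, hγu, hγv⟩ :=
      stmt14_aux (closure F) (closure E) C hC γ hγ isClosed_closure isClosed_closure
        (fun x a b => hdisj x b a) (hmap'.mono_right (union_comm _ _).subset)
        htC hsC h (subset_closure htF) (subset_closure hsE)
    refine le_trans ?_ (ENNReal.le_tsum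
      (⟨(u, v), huC, hvC, huv, hgap⟩ :
        {q : ℝ × ℝ // q.1 ∈ C ∧ q.2 ∈ C ∧ q.1 < q.2 ∧ Set.Ioo q.1 q.2 ∩ C = ∅}))
    rw [edist_comm]
    exact key _ _ hγv hγu
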